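/- arXiv:1809.06982 — 4 statements merged into one kernel-verified Lean document; each statement's English description precedes it below -/
import Mathlib

section
/- Let κ > 0, ρ₀ > 0, 0 < b ≤ ρ₀, and Λ ≥ κ be real numbers, let α be a real number, and let K : ℝ → ℝ be integrable on [0, b] with K(t) ≥ −κ² for all t ∈ [0, b]. Then α²·(−Λ·cosh(κb)² + ∫₀^b (κ²·sinh(κt)² − cosh(κt)²·K(t)) dt) ≤ α²·(κ·tanh(κρ₀) − Λ), and the right-hand side is ≤ 0. -/
open Real

lemma my_tanh_lt_one (x : ℝ) : Real.tanh x < 1 := by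
  rw [Real.tanh_eq_sinh_div_cosh, div_lt_one (Real.cosh_pos x)]
  have h : Real.cosh x - Real.sinh x = Real.exp (-x) := Real.cosh_sub_sinh x
  nlinarith [Real.exp_pos (-x)]

lemma my_tanh_mono {a c : ℝ} (h : a ≤ c) : Real.tanh a ≤ Real.tanh c := by
  rw [Real.tanh_eq_sinh_div_cosh, Real.tanh_eq_sinh_div_cosh,
    div_le_div_iff₀ (Real.cosh_pos a) (Real.cosh_pos c)]
  have hs : Real.sinh (a - c) ≤ 0 := by
    have : Real.sinh (a - c) ≤ Real.sinh 0 := Real.sinh_le_sinh.2 (by linarith)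
    simpa using this
  rw [Real.sinh_sub] at hs
  linarith

theorem second_variation_estimate (κ ρ₀ b Λ α : ℝ) (hκ : 0 < κ) (hρ₀ : 0 < ρ₀)
    (hb : 0 < b) (hbρ₀ : b ≤ ρ₀) (hΛ : κ ≤ Λ)
    (K : ℝ → ℝ) (hK_int : IntervalIntegrable K MeasureTheory.volume 0 b)
    (hK : ∀ t ∈ Set.Icc (0:ℝ) b, -κ ^ 2 ≤ K t) :
    α ^ 2 * (-Λ * Real.cosh (κ * b) ^ 2 +
        ∫ t in (0:ℝ)..b, (κ ^ 2 * Real.sinh (κ * t) ^ 2 - Real.cosh (κ * t) ^ 2 * K t))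
      ≤ α ^ 2 * (κ * Real.tanh (κ * ρ₀) - Λ) ∧
    α ^ 2 * (κ * Real.tanh (κ * ρ₀) - Λ) ≤ 0 := by
  have hcb := Real.cosh_pos (κ * b)
  -- integrability of the integrand
  have hcont : Continuous fun t => κ ^ 2 * Real.sinh (κ * t) ^ 2 :=
    continuous_const.mul ((Real.continuous_sinh.comp (continuous_const.mul continuous_id)).pow 2)
  have hcont2 : ContinuousOn (fun t => Real.cosh (κ * t) ^ 2) (Set.uIcc (0:ℝ) b) :=
    (((Real.continuous_cosh.comp (continuous_const.mul continuous_id)).pow 2)).continuousOn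
  have hint1 : IntervalIntegrable
      (fun t => κ ^ 2 * Real.sinh (κ * t) ^ 2 - Real.cosh (κ * t) ^ 2 * K t)
      MeasureTheory.volume 0 b :=
    (hcont.intervalIntegrable 0 b).sub (hK_int.continuousOn_mul hcont2)
  have hint2 : IntervalIntegrable (fun t => κ ^ 2 * Real.cosh (2 * (κ * t)))
      MeasureTheory.volume 0 b := by
    exact (continuous_const.mul (Real.continuous_cosh.comp
      (continuous_const.mul (continuous_const.mul continuous_id)))).intervalIntegrable 0 b
  -- pointwise bound
  have h1 : (∫ t in (0:ℝ)..b, (κ ^ 2 * Real.sinh (κ * t) ^ 2 - Real.cosh (κ * t) ^ 2 * K t))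
      ≤ ∫ t in (0:ℝ)..b, κ ^ 2 * Real.cosh (2 * (κ * t)) := by
    apply intervalIntegral.integral_mono_on hb.le hint1 hint2
    intro t ht
    have hk := hK t ht
    have hc2 : Real.cosh (2 * (κ * t)) = Real.cosh (κ * t) ^ 2 + Real.sinh (κ * t) ^ 2 :=
      Real.cosh_two_mul (κ * t)
    have hcs : Real.cosh (κ * t) ^ 2 = Real.sinh (κ * t) ^ 2 + 1 := Real.cosh_sq (κ * t)
    nlinarith [sq_nonneg (Real.cosh (κ * t)), sq_nonneg κ]
  -- compute the comparison integral
  have h2 : (∫ t in (0:ℝ)..b, κ ^ 2 * Real.cosh (2 * (κ * t)))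
      = κ * Real.sinh (κ * b) * Real.cosh (κ * b) := by
    have hder : ∀ t ∈ Set.uIcc (0:ℝ) b,
        HasDerivAt (fun t => κ / 2 * Real.sinh (2 * (κ * t)))
          (κ ^ 2 * Real.cosh (2 * (κ * t))) t := by
      intro t _
      have h := ((Real.hasDerivAt_sinh (2 * (κ * t))).comp t
        (((hasDerivAt_id t).const_mul κ).const_mul 2)).const_mul (κ / 2)
      refine h.congr_deriv ?_
      ring
    rw [intervalIntegral.integral_eq_sub_of_hasDerivAt hder hint2]
    simp [Real.sinh_two_mul]
    ring
  -- combine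
  have htanh : Real.tanh (κ * b) = Real.sinh (κ * b) / Real.cosh (κ * b) :=
    Real.tanh_eq_sinh_div_cosh (κ * b)
  have hlt1 : Real.tanh (κ * b) < 1 := my_tanh_lt_one _
  have hlt1' : Real.tanh (κ * ρ₀) < 1 := my_tanh_lt_one _
  have hmono : Real.tanh (κ * b) ≤ Real.tanh (κ * ρ₀) :=
    my_tanh_mono (by nlinarith)
  have hcsq : 1 ≤ Real.cosh (κ * b) ^ 2 := by
    nlinarith [Real.cosh_sq (κ * b), sq_nonneg (Real.sinh (κ * b))]
  have hx : κ * Real.tanh (κ * b) - Λ ≤ 0 := by nlinarith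
  have key : -Λ * Real.cosh (κ * b) ^ 2 + κ * Real.sinh (κ * b) * Real.cosh (κ * b)
      = Real.cosh (κ * b) ^ 2 * (κ * Real.tanh (κ * b) - Λ) := by
    rw [htanh]; field_simp; ring
  have hmain : -Λ * Real.cosh (κ * b) ^ 2 +
      (∫ t in (0:ℝ)..b, (κ ^ 2 * Real.sinh (κ * t) ^ 2 - Real.cosh (κ * t) ^ 2 * K t))
      ≤ κ * Real.tanh (κ * ρ₀) - Λ := by
    have step : Real.cosh (κ * b) ^ 2 * (κ * Real.tanh (κ * b) - Λ)
        ≤ κ * Real.tanh (κ * b) - Λ := by nlinarith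
    nlinarith
  have hright : κ * Real.tanh (κ * ρ₀) - Λ ≤ 0 := by nlinarith
  constructor
  · exact mul_le_mul_of_nonneg_left hmain (sq_nonneg α)
  · exact mul_nonpos_of_nonneg_of_nonpos (sq_nonneg α) hright
end

section
/- Let κ > 0, ρ₀ > 0 and Λ ≥ κ be real numbers, and let α, β be real numbers with α² + β² = 1. Let f : ℝ → ℝ be twice differentiable at 0 with f(0) = b where 0 < b ≤ ρ₀, f'(0) = −β, and f''(0) ≤ α²·(κ·tanh(κρ₀) − Λ). Then the second derivative at 0 of the function s ↦ −log(f(s)) is at least min{1/ρ₀², (Λ − κ·tanh(κρ₀))/ρ₀}, and this minimum is strictly positive. -/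
theorem neg_log_convexity_lower_bound (κ ρ₀ Λ α β b : ℝ) (hκ : 0 < κ) (hρ₀ : 0 < ρ₀)
    (hΛ : κ ≤ Λ) (hαβ : α ^ 2 + β ^ 2 = 1)
    (f : ℝ → ℝ)
    (hf : ∀ᶠ s in nhds (0:ℝ), DifferentiableAt ℝ f s)
    (hf'' : DifferentiableAt ℝ (deriv f) 0)
    (hf0 : f 0 = b) (hb : 0 < b) (hbρ₀ : b ≤ ρ₀)
    (hf'0 : deriv f 0 = -β)
    (hf''0 : deriv (deriv f) 0 ≤ α ^ 2 * (κ * Real.tanh (κ * ρ₀) - Λ)) :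
    min (1 / ρ₀ ^ 2) ((Λ - κ * Real.tanh (κ * ρ₀)) / ρ₀)
      ≤ deriv (deriv (fun s => -Real.log (f s))) 0 ∧
    0 < min (1 / ρ₀ ^ 2) ((Λ - κ * Real.tanh (κ * ρ₀)) / ρ₀) := by
  set T := κ * Real.tanh (κ * ρ₀) with hT
  have htanh : Real.tanh (κ * ρ₀) < 1 := by
    rw [Real.tanh_eq_sinh_div_cosh]
    rw [div_lt_one (Real.cosh_pos _)]
    exact Real.sinh_lt_cosh _
  have hTκ : T < κ := by
    calc T = κ * Real.tanh (κ * ρ₀) := rfl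
    _ < κ * 1 := by exact mul_lt_mul_of_pos_left htanh hκ
    _ = κ := mul_one κ
  have hΛT : 0 < Λ - T := by linarith
  have hminpos : 0 < min (1 / ρ₀ ^ 2) ((Λ - T) / ρ₀) := by
    apply lt_min
    · positivity
    · positivity
  have h0f : (0:ℝ) < f 0 := by rw [hf0]; exact hb
  have hfc : ContinuousAt f 0 := hf.self_of_nhds.continuousAt
  have hpos : ∀ᶠ s in nhds (0:ℝ), 0 < f s := hfc.eventually (eventually_gt_nhds h0f)
  have key : ∀ᶠ s in nhds (0:ℝ),
      deriv (fun t => -Real.log (f t)) s = -(deriv f s / f s) := by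
    filter_upwards [hf, hpos] with s hds hps
    have h1 : HasDerivAt (fun t => -Real.log (f t)) (-(deriv f s / f s)) s := by
      exact (hds.hasDerivAt.log (ne_of_gt hps)).neg
    exact h1.deriv
  have hd2 : deriv (deriv (fun s => -Real.log (f s))) 0
      = deriv (fun s => -(deriv f s / f s)) 0 := by
    apply Filter.EventuallyEq.deriv_eq
    exact key
  have hdivdiff : DifferentiableAt ℝ f 0 := hf.self_of_nhds
  have hne : f 0 ≠ 0 := ne_of_gt h0f
  have hd3 : deriv (fun s => -(deriv f s / f s)) 0
      = -((deriv (deriv f) 0 * f 0 - deriv f 0 * deriv f 0) / f 0 ^ 2) := by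
    rw [deriv.fun_neg, deriv_fun_div hf'' hdivdiff hne]
  set A := deriv (deriv f) 0 with hA
  have hval : deriv (deriv (fun s => -Real.log (f s))) 0 = β ^ 2 / b ^ 2 - A / b := by
    rw [hd2, hd3, hf0, hf'0]
    field_simp
    ring
  refine ⟨?_, hminpos⟩
  rw [hval]
  have hAle : A ≤ α ^ 2 * (T - Λ) := hf''0
  have hb2 : 0 < b ^ 2 := by positivity
  have hρ2 : 0 < ρ₀ ^ 2 := by positivity
  have h1 : β ^ 2 / ρ₀ ^ 2 ≤ β ^ 2 / b ^ 2 := by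
    apply div_le_div_of_nonneg_left (by positivity) hb2
    nlinarith
  have h2 : α ^ 2 * (Λ - T) / ρ₀ ≤ -A / b := by
    apply div_le_div₀ (by nlinarith) (by nlinarith) hb hbρ₀
  have hm1 : min (1 / ρ₀ ^ 2) ((Λ - T) / ρ₀) ≤ 1 / ρ₀ ^ 2 := min_le_left _ _
  have hm2 : min (1 / ρ₀ ^ 2) ((Λ - T) / ρ₀) ≤ (Λ - T) / ρ₀ := min_le_right _ _
  set m := min (1 / ρ₀ ^ 2) ((Λ - T) / ρ₀) with hm
  have hαm : α ^ 2 * m ≤ α ^ 2 * ((Λ - T) / ρ₀) :=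
    mul_le_mul_of_nonneg_left hm2 (sq_nonneg α)
  have hβm : β ^ 2 * m ≤ β ^ 2 * (1 / ρ₀ ^ 2) :=
    mul_le_mul_of_nonneg_left hm1 (sq_nonneg β)
  have hmeq : m = α ^ 2 * m + β ^ 2 * m := by rw [← add_mul, hαβ, one_mul]
  have hcomb : m ≤ β ^ 2 / ρ₀ ^ 2 + α ^ 2 * (Λ - T) / ρ₀ := by
    rw [hmeq]
    have e1 : β ^ 2 * (1 / ρ₀ ^ 2) = β ^ 2 / ρ₀ ^ 2 := by ring
    have e2 : α ^ 2 * ((Λ - T) / ρ₀) = α ^ 2 * (Λ - T) / ρ₀ := by ring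
    linarith
  have h2' : α ^ 2 * (Λ - T) / ρ₀ ≤ -(A / b) := by rw [← neg_div]; exact h2
  linarith
end

section
/- Let q ≥ 1 be an integer and κ > 0, b > 0 real numbers. Let S₁, …, S_q be real numbers with S₁ + ⋯ + S_q ≥ qκ, and let K₁, …, K_q : ℝ → ℝ be functions integrable on [0, b] with K₁(t) + ⋯ + K_q(t) ≥ −qκ² for all t ∈ [0, b]. Then the sum over k = 1, …, q of (−S_k·cosh(κb)² + ∫₀^b (κ²·sinh(κt)² − cosh(κt)²·K_k(t)) dt) is at most q·cosh(κb)²·(κ·tanh(κb) − κ), which is strictly negative. -/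
set_option maxHeartbeats 1000000

open Real intervalIntegral

private lemma cont_aux (κ : ℝ) : Continuous (fun t : ℝ => Real.cosh (κ * t) ^ 2) :=
  (Real.continuous_cosh.comp (continuous_const.mul continuous_id)).pow 2

private lemma cont_aux2 (κ : ℝ) : Continuous (fun t : ℝ => κ ^ 2 * Real.sinh (κ * t) ^ 2) :=
  continuous_const.mul ((Real.continuous_sinh.comp (continuous_const.mul continuous_id)).pow 2)

private lemma cont_aux3 (q : ℕ) (κ : ℝ) :
    Continuous (fun t : ℝ => (q : ℝ) * κ ^ 2 * (Real.sinh (κ * t) ^ 2 + Real.cosh (κ * t) ^ 2)) :=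
  continuous_const.mul (((Real.continuous_sinh.comp (continuous_const.mul continuous_id)).pow 2).add
    ((Real.continuous_cosh.comp (continuous_const.mul continuous_id)).pow 2))


theorem case_one_sum_estimate (q : ℕ) (hq : 1 ≤ q) (κ b : ℝ) (hκ : 0 < κ) (hb : 0 < b)
    (S : Fin q → ℝ) (hS : (q : ℝ) * κ ≤ ∑ k, S k)
    (K : Fin q → ℝ → ℝ)
    (hK_int : ∀ k, IntervalIntegrable (K k) MeasureTheory.volume 0 b)
    (hK : ∀ t ∈ Set.Icc (0:ℝ) b, -(q : ℝ) * κ ^ 2 ≤ ∑ k, K k t) :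
    (∑ k, (-S k * Real.cosh (κ * b) ^ 2 +
        ∫ t in (0:ℝ)..b, (κ ^ 2 * Real.sinh (κ * t) ^ 2 - Real.cosh (κ * t) ^ 2 * K k t)))
      ≤ (q : ℝ) * Real.cosh (κ * b) ^ 2 * (κ * Real.tanh (κ * b) - κ) ∧
    (q : ℝ) * Real.cosh (κ * b) ^ 2 * (κ * Real.tanh (κ * b) - κ) < 0 := by
  have hc : 0 < Real.cosh (κ * b) := Real.cosh_pos _
  constructor
  · -- integrability of each integrand
    have hint : ∀ k : Fin q, IntervalIntegrable
        (fun t => κ ^ 2 * Real.sinh (κ * t) ^ 2 - Real.cosh (κ * t) ^ 2 * K k t)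
        MeasureTheory.volume 0 b := by
      intro k
      exact ((cont_aux2 κ).intervalIntegrable 0 b).sub
        ((hK_int k).continuousOn_mul (cont_aux κ).continuousOn)
    have hsum_int :
        (∑ k, ∫ t in (0:ℝ)..b,
            (κ ^ 2 * Real.sinh (κ * t) ^ 2 - Real.cosh (κ * t) ^ 2 * K k t))
          = ∫ t in (0:ℝ)..b, ∑ k,
            (κ ^ 2 * Real.sinh (κ * t) ^ 2 - Real.cosh (κ * t) ^ 2 * K k t) :=
      (intervalIntegral.integral_finset_sum (fun k _ => hint k)).symm
    -- bound the integral
    have hint1 : IntervalIntegrable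
        (fun t => ∑ k, (κ ^ 2 * Real.sinh (κ * t) ^ 2 - Real.cosh (κ * t) ^ 2 * K k t))
        MeasureTheory.volume 0 b := by
      have h := IntervalIntegrable.sum (μ := MeasureTheory.volume) (a := (0:ℝ)) (b := b)
        (Finset.univ : Finset (Fin q)) (fun k _ => hint k)
      have heq : (fun t => ∑ k, (κ ^ 2 * Real.sinh (κ * t) ^ 2 - Real.cosh (κ * t) ^ 2 * K k t))
          = ∑ k : Fin q, fun t => κ ^ 2 * Real.sinh (κ * t) ^ 2 - Real.cosh (κ * t) ^ 2 * K k t := by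
        ext t; simp
      rw [heq]; exact h
    have hmono :
        (∫ t in (0:ℝ)..b, ∑ k,
            (κ ^ 2 * Real.sinh (κ * t) ^ 2 - Real.cosh (κ * t) ^ 2 * K k t))
          ≤ ∫ t in (0:ℝ)..b,
            (q : ℝ) * κ ^ 2 * (Real.sinh (κ * t) ^ 2 + Real.cosh (κ * t) ^ 2) := by
      apply intervalIntegral.integral_mono_on hb.le hint1
        ((cont_aux3 q κ).intervalIntegrable 0 b)
      intro t ht
      have h1 : (∑ k, (κ ^ 2 * Real.sinh (κ * t) ^ 2 - Real.cosh (κ * t) ^ 2 * K k t))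
          = (q : ℝ) * (κ ^ 2 * Real.sinh (κ * t) ^ 2)
            - Real.cosh (κ * t) ^ 2 * ∑ k, K k t := by
        rw [Finset.sum_sub_distrib, Finset.sum_const, Finset.mul_sum]
        simp [nsmul_eq_mul]
      rw [h1]
      have h2 : -(Real.cosh (κ * t) ^ 2 * ∑ k, K k t)
          ≤ Real.cosh (κ * t) ^ 2 * ((q : ℝ) * κ ^ 2) := by
        rw [← mul_neg]
        apply mul_le_mul_of_nonneg_left _ (sq_nonneg _)
        have := hK t ht
        linarith
      nlinarith [sq_nonneg (Real.cosh (κ * t))]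
    -- compute the majorizing integral
    have hFT : (∫ t in (0:ℝ)..b,
          (q : ℝ) * κ ^ 2 * (Real.sinh (κ * t) ^ 2 + Real.cosh (κ * t) ^ 2))
        = (q : ℝ) * κ * (Real.sinh (κ * b) * Real.cosh (κ * b)) := by
      have hder : ∀ t ∈ Set.uIcc (0:ℝ) b,
          HasDerivAt (fun t => (q : ℝ) * κ * (Real.sinh (κ * t) * Real.cosh (κ * t)))
            ((q : ℝ) * κ ^ 2 * (Real.sinh (κ * t) ^ 2 + Real.cosh (κ * t) ^ 2)) t := by
        intro t _
        have hlin : HasDerivAt (fun x : ℝ => κ * x) κ t := by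
          simpa using (hasDerivAt_id t).const_mul κ
        have hs : HasDerivAt (fun x => Real.sinh (κ * x)) (Real.cosh (κ * t) * κ) t :=
          (Real.hasDerivAt_sinh (κ * t)).comp t hlin
        have hc' : HasDerivAt (fun x => Real.cosh (κ * x)) (Real.sinh (κ * t) * κ) t :=
          (Real.hasDerivAt_cosh (κ * t)).comp t hlin
        have := ((hs.mul hc').const_mul ((q : ℝ) * κ))
        refine this.congr_deriv ?_
        ring
      rw [intervalIntegral.integral_eq_sub_of_hasDerivAt hder
        ((cont_aux3 q κ).intervalIntegrable 0 b)]
      simp [mul_comm]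
    -- assemble
    have hsplit : (∑ k, (-S k * Real.cosh (κ * b) ^ 2 +
        ∫ t in (0:ℝ)..b, (κ ^ 2 * Real.sinh (κ * t) ^ 2 - Real.cosh (κ * t) ^ 2 * K k t)))
        = -(∑ k, S k) * Real.cosh (κ * b) ^ 2 +
          ∑ k, ∫ t in (0:ℝ)..b,
            (κ ^ 2 * Real.sinh (κ * t) ^ 2 - Real.cosh (κ * t) ^ 2 * K k t) := by
      rw [Finset.sum_add_distrib, ← Finset.sum_neg_distrib, ← Finset.sum_mul]
    rw [hsplit, hsum_int]
    have hS' : -(∑ k, S k) * Real.cosh (κ * b) ^ 2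
        ≤ -((q : ℝ) * κ) * Real.cosh (κ * b) ^ 2 := by
      apply mul_le_mul_of_nonneg_right _ (sq_nonneg _)
      linarith
    have htanh : Real.tanh (κ * b) = Real.sinh (κ * b) / Real.cosh (κ * b) :=
      Real.tanh_eq_sinh_div_cosh _
    have hRHS : (q : ℝ) * Real.cosh (κ * b) ^ 2 * (κ * Real.tanh (κ * b) - κ)
        = (q : ℝ) * κ * (Real.sinh (κ * b) * Real.cosh (κ * b))
          + -((q : ℝ) * κ) * Real.cosh (κ * b) ^ 2 := by
      rw [htanh]
      field_simp
      ring
    rw [hRHS]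
    linarith [hmono, hFT ▸ hmono]
  · apply mul_neg_of_pos_of_neg
    · positivity
    · have ht : Real.sinh (κ * b) < Real.cosh (κ * b) := Real.sinh_lt_cosh _
      rw [Real.tanh_eq_sinh_div_cosh]
      have h1 : Real.sinh (κ * b) / Real.cosh (κ * b) < 1 := (div_lt_one hc).mpr ht
      nlinarith
end

section
/- Let E be a real inner product space, let f : E → ℝ and χ : ℝ → ℝ be twice continuously differentiable, let x ∈ E, let q ≥ 1 be an integer and let X₁, …, X_q ∈ E be vectors. Suppose θ > 0, P > 0 and β > 0 are real numbers such that |Df(x)(X₁)| ≥ θ, D²f(x)(X_k, X_k) ≤ P for every k = 1, …, q, χ'(−f(x)) > 0, and χ''(−f(x)) ≥ χ'(−f(x))·(β + qP)/θ². Then Σ_{k=1}^q D²g(x)(X_k, X_k) ≥ β·χ'(−f(x)), where g(x) = χ(−f(x)), Df(x) denotes the Fréchet derivative of f at x, and D²f(x), D²g(x) the second Fréchet derivatives as bilinear forms. -/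
theorem case_three_hessian_lower_bound {E : Type*} [NormedAddCommGroup E]
    [InnerProductSpace ℝ E]
    (f : E → ℝ) (χ : ℝ → ℝ) (hf : ContDiff ℝ 2 f) (hχ : ContDiff ℝ 2 χ)
    (x : E) (q : ℕ) (hq : 1 ≤ q) (X : Fin q → E)
    (θ P β : ℝ) (hθ : 0 < θ) (hP : 0 < P) (hβ : 0 < β)
    (hgrad : θ ≤ |fderiv ℝ f x (X ⟨0, hq⟩)|)
    (hhess : ∀ k, fderiv ℝ (fderiv ℝ f) x (X k) (X k) ≤ P)
    (hχ' : 0 < deriv χ (-f x))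
    (hχ'' : deriv χ (-f x) * (β + (q : ℝ) * P) / θ ^ 2 ≤ deriv (deriv χ) (-f x))
    (g : E → ℝ) (hg : g = fun x => χ (-f x)) :
    β * deriv χ (-f x) ≤ ∑ k, fderiv ℝ (fderiv ℝ g) x (X k) (X k) := by
  have hfd : Differentiable ℝ f := hf.differentiable (by norm_num)
  have hχd : Differentiable ℝ χ := hχ.differentiable (by norm_num)
  have hFdiff : Differentiable ℝ (fderiv ℝ f) :=
    (hf.fderiv_right (m := 1) (by norm_num)).differentiable (by norm_num)
  have hχ2 : ContDiff ℝ ((1 : ℕ) + 1) χ := by exact_mod_cast hχ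
  have hχ'diff : Differentiable ℝ (deriv χ) :=
    ((contDiff_succ_iff_deriv.mp hχ2).2.2).differentiable (by norm_num)
  -- first derivative of g
  have hgd : ∀ y : E, HasFDerivAt g ((deriv χ (-f y)) • (-(fderiv ℝ f y))) y := by
    intro y
    have h1 : HasFDerivAt (fun z => -f z) (-(fderiv ℝ f y)) y := (hfd y).hasFDerivAt.neg
    have h2 : HasDerivAt χ (deriv χ (-f y)) (-f y) := (hχd (-f y)).hasDerivAt
    rw [hg]
    exact h2.comp_hasFDerivAt y h1
  have hgeq : fderiv ℝ g = fun y => (deriv χ (-f y)) • (-(fderiv ℝ f y)) :=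
    funext fun y => (hgd y).fderiv
  -- second derivative of g
  have h1x : HasFDerivAt (fun z => -f z) (-(fderiv ℝ f x)) x := (hfd x).hasFDerivAt.neg
  have hc : HasFDerivAt (fun y => deriv χ (-f y))
      ((deriv (deriv χ) (-f x)) • (-(fderiv ℝ f x))) x :=
    by have := ((hχ'diff (-f x)).hasDerivAt).comp_hasFDerivAt x h1x; exact this
  have hFneg : HasFDerivAt (fun y => -(fderiv ℝ f y)) (-(fderiv ℝ (fderiv ℝ f) x)) x :=
    (hFdiff x).hasFDerivAt.neg
  have h2g : HasFDerivAt (fun y => (deriv χ (-f y)) • (-(fderiv ℝ f y)))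
      ((deriv χ (-f x)) • (-(fderiv ℝ (fderiv ℝ f) x)) +
        (((deriv (deriv χ) (-f x)) • (-(fderiv ℝ f x))).smulRight (-(fderiv ℝ f x)))) x :=
    hc.smul hFneg
  have key : ∀ k, fderiv ℝ (fderiv ℝ g) x (X k) (X k) =
      deriv (deriv χ) (-f x) * (fderiv ℝ f x (X k))^2
        - deriv χ (-f x) * (fderiv ℝ (fderiv ℝ f) x (X k) (X k)) := by
    intro k
    rw [hgeq, h2g.fderiv]
    simp [ContinuousLinearMap.smul_apply, ContinuousLinearMap.smulRight_apply]
    ring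
  have hχ''nn : 0 ≤ deriv (deriv χ) (-f x) := le_trans (by positivity) hχ''
  have hterm : ∀ k : Fin q,
      (if k = (⟨0, hq⟩ : Fin q) then deriv (deriv χ) (-f x) * θ ^ 2 else 0)
        - deriv χ (-f x) * P ≤ fderiv ℝ (fderiv ℝ g) x (X k) (X k) := by
    intro k
    rw [key k]
    have h2 : deriv χ (-f x) * (fderiv ℝ (fderiv ℝ f) x (X k) (X k)) ≤ deriv χ (-f x) * P :=
      mul_le_mul_of_nonneg_left (hhess k) hχ'.le
    have h1 : (if k = (⟨0, hq⟩ : Fin q) then deriv (deriv χ) (-f x) * θ ^ 2 else 0)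
        ≤ deriv (deriv χ) (-f x) * (fderiv ℝ f x (X k))^2 := by
      split_ifs with hk
      · rw [hk]
        have : θ ^ 2 ≤ (fderiv ℝ f x (X ⟨0, hq⟩)) ^ 2 := by
          calc θ ^ 2 ≤ |fderiv ℝ f x (X ⟨0, hq⟩)| ^ 2 := pow_le_pow_left₀ hθ.le hgrad 2
            _ = _ := sq_abs _
        exact mul_le_mul_of_nonneg_left this hχ''nn
      · positivity
    linarith
  have hsum : deriv (deriv χ) (-f x) * θ ^ 2 - (q : ℝ) * (deriv χ (-f x) * P) =
      ∑ k : Fin q, ((if k = (⟨0, hq⟩ : Fin q) then deriv (deriv χ) (-f x) * θ ^ 2 else 0)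
        - deriv χ (-f x) * P) := by
    rw [Finset.sum_sub_distrib, Finset.sum_ite_eq', Finset.sum_const]
    simp [mul_comm]
  have hmul : deriv χ (-f x) * (β + (q : ℝ) * P) ≤ deriv (deriv χ) (-f x) * θ ^ 2 := by
    have := (div_le_iff₀ (by positivity : (0:ℝ) < θ ^ 2)).mp hχ''
    linarith
  calc β * deriv χ (-f x)
      ≤ deriv (deriv χ) (-f x) * θ ^ 2 - (q : ℝ) * (deriv χ (-f x) * P) := by nlinarith
    _ = _ := hsum
    _ ≤ _ := Finset.sum_le_sum fun k _ => hterm k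
end
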